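/- Binding incentive constraints: if (s,p) is an optimal contract that is not trivial (i.e., s_t > 0 for some t), then p_0 = 0, Π_t(s,p) = π(s_t)/(1−δ) for every t ≥ 1, and W_{t+1}(s,p) = w(s_t)/(1−δ) for every t ≥ 0. -/

import Mathlib

open Set Filter

/-- Principal's continuation value `Π_t(s,p) = Σ_{τ=t}^∞ δ^{τ−t}(π(s_τ) − p_τ)`. -/
noncomputable def PiVal (δ : ℝ) (π : ℝ → ℝ) (s p : ℕ → ℝ) (t : ℕ) : ℝ :=
  ∑' k : ℕ, δ ^ k * (π (s (t + k)) - p (t + k))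

/-- Expert's continuation value `W_t(s,p) = Σ_{τ=t}^∞ δ^{τ−t}(w(s_τ) + p_τ)`. -/
noncomputable def WVal (δ : ℝ) (w : ℝ → ℝ) (s p : ℕ → ℝ) (t : ℕ) : ℝ :=
  ∑' k : ℕ, δ ^ k * (w (s (t + k)) + p (t + k))

/-- A contract: `s` takes values in `[0,1]`, `s 0 = 0`, and `t ↦ δ^t·p_t` is summable. -/
def IsContract (δ : ℝ) (s p : ℕ → ℝ) : Prop :=
  (∀ t, s t ∈ Set.Icc (0 : ℝ) 1) ∧ s 0 = 0 ∧ Summable fun t => δ ^ t * p t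

/-- Implementability: feasibility (monotone `s`, nonnegative `p`) plus (P-IC) and (E-IC). -/
def Implementable (δ : ℝ) (π w : ℝ → ℝ) (s p : ℕ → ℝ) : Prop :=
  IsContract δ s p ∧ Monotone s ∧ (∀ t, 0 ≤ p t) ∧
  (∀ t, π (s t) / (1 - δ) ≤ PiVal δ π s p t) ∧
  (∀ t, w (s t) / (1 - δ) ≤ WVal δ w s p (t + 1))

/-- An optimal contract maximizes the principal's time-0 profit among implementable contracts. -/
def Optimal (δ : ℝ) (π w : ℝ → ℝ) (s p : ℕ → ℝ) : Prop :=
  Implementable δ π w s p ∧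
  ∀ s' p' : ℕ → ℝ, Implementable δ π w s' p' → PiVal δ π s' p' 0 ≤ PiVal δ π s p 0

/- ----------------- auxiliary lemmas ----------------- -/

lemma summable_aux {δ : ℝ} (h0 : 0 ≤ δ) (h1 : δ < 1) (f : ℕ → ℝ) (C : ℝ)
    (hC : ∀ n, |f n| ≤ C) : Summable fun k => δ ^ k * f k := by
  apply Summable.of_norm_bounded
    ((summable_geometric_of_lt_one h0 h1).mul_right C)
  intro k
  rw [Real.norm_eq_abs, abs_mul, abs_of_nonneg (pow_nonneg h0 k)]
  exact mul_le_mul_of_nonneg_left (hC k) (pow_nonneg h0 k)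

lemma rec_aux (δ : ℝ) (g : ℕ → ℝ) (h : ∀ u, Summable fun k => δ ^ k * g (u + k)) (t : ℕ) :
    ∑' k, δ ^ k * g (t + k) = g t + δ * ∑' k, δ ^ k * g (t + 1 + k) := by
  rw [Summable.tsum_eq_zero_add (h t)]
  congr 1
  · simp
  · rw [← tsum_mul_left]
    refine tsum_congr fun k => ?_
    have e : t + (k + 1) = t + 1 + k := by omega
    rw [e, pow_succ]
    ring

lemma shift_summable {δ : ℝ} (h0 : 0 < δ) (p : ℕ → ℝ)
    (h : Summable fun n => δ ^ n * p n) (t : ℕ) :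
    Summable fun k => δ ^ k * p (t + k) := by
  have h1 : Summable fun n => δ ^ (n + t) * p (n + t) := (summable_nat_add_iff t).mpr h
  refine (h1.mul_left ((δ ^ t)⁻¹)).congr fun k => ?_
  have ht : (δ : ℝ) ^ t ≠ 0 := (pow_pos h0 t).ne'
  rw [add_comm t k, pow_add]
  field_simp

lemma PiW_aux (δ : ℝ) (π w : ℝ → ℝ) (s P : ℕ → ℝ) (t : ℕ)
    (h1 : Summable fun k => δ ^ k * π (s (t + k)))
    (h2 : Summable fun k => δ ^ k * w (s (t + k)))
    (h3 : Summable fun k => δ ^ k * P (t + k)) :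
    PiVal δ π s P t + WVal δ w s P t
      = ∑' k, δ ^ k * (π (s (t + k)) + w (s (t + k))) := by
  have e1 : PiVal δ π s P t
      = (∑' k, δ ^ k * π (s (t + k))) - ∑' k, δ ^ k * P (t + k) := by
    rw [← Summable.tsum_sub h1 h3]
    exact tsum_congr fun k => by ring
  have e2 : WVal δ w s P t
      = (∑' k, δ ^ k * w (s (t + k))) + ∑' k, δ ^ k * P (t + k) := by
    rw [← Summable.tsum_add h2 h3]
    exact tsum_congr fun k => by ring
  have e3 : (∑' k, δ ^ k * (π (s (t + k)) + w (s (t + k))))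
      = (∑' k, δ ^ k * π (s (t + k))) + ∑' k, δ ^ k * w (s (t + k)) := by
    rw [← Summable.tsum_add h1 h2]
    exact tsum_congr fun k => by ring
  rw [e1, e2, e3]; ring

/-- Canonical payments making the expert's IC bind everywhere. -/
noncomputable def canonP (δ : ℝ) (w : ℝ → ℝ) (s : ℕ → ℝ) : ℕ → ℝ
  | 0 => 0
  | n + 1 => (w (s n) - w (s (n + 1))) / (1 - δ)

lemma canon_nonneg (δ : ℝ) (hδ1 : δ < 1) (w : ℝ → ℝ) (s : ℕ → ℝ)
    (hw : ∀ n, w (s (n + 1)) ≤ w (s n)) : ∀ n, 0 ≤ canonP δ w s n := by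
  intro n
  cases n with
  | zero => exact le_of_eq rfl
  | succ n =>
    show 0 ≤ (w (s n) - w (s (n + 1))) / (1 - δ)
    exact div_nonneg (by linarith [hw n]) (by linarith)

lemma canon_bdd (δ : ℝ) (hδ1 : δ < 1) (w : ℝ → ℝ) (s : ℕ → ℝ) (C : ℝ)
    (hC : ∀ n, |w (s n)| ≤ C) : ∀ n, |canonP δ w s n| ≤ (C + C) / (1 - δ) := by
  have h1δ : (0:ℝ) < 1 - δ := by linarith
  have hC0 : 0 ≤ C := le_trans (abs_nonneg _) (hC 0)
  intro n
  cases n with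
  | zero =>
    show |(0:ℝ)| ≤ (C + C) / (1 - δ)
    simpa using div_nonneg (by linarith) h1δ.le
  | succ n =>
    show |(w (s n) - w (s (n + 1))) / (1 - δ)| ≤ (C + C) / (1 - δ)
    rw [abs_div, abs_of_pos h1δ]
    have h := abs_add_le (w (s n)) (-(w (s (n + 1))))
    rw [abs_neg, ← sub_eq_add_neg] at h
    have h2 : |w (s n) - w (s (n+1))| ≤ C + C :=
      le_trans h (add_le_add (hC n) (hC (n+1)))
    rw [div_eq_mul_inv, div_eq_mul_inv]
    exact mul_le_mul_of_nonneg_right h2 (inv_nonneg.mpr h1δ.le)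

lemma canon_WVal (δ : ℝ) (hδ1 : δ < 1) (w : ℝ → ℝ) (s : ℕ → ℝ)
    (hsum : ∀ u, Summable fun k => δ ^ k * w (s (u + k))) (t : ℕ) :
    WVal δ w s (canonP δ w s) (t + 1) = w (s t) / (1 - δ) := by
  have h1δ : (0:ℝ) < 1 - δ := by linarith
  have hne : (1:ℝ) - δ ≠ 0 := h1δ.ne'
  have key : ∀ k : ℕ, δ ^ k * (w (s (t + 1 + k)) + canonP δ w s (t + 1 + k))
      = (1 - δ)⁻¹ * (δ ^ k * w (s (t + k)) - δ * (δ ^ k * w (s (t + 1 + k)))) := by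
    intro k
    have e : t + 1 + k = (t + k) + 1 := by omega
    rw [e]
    show δ ^ k * (w (s (t + k + 1)) + (w (s (t + k)) - w (s (t + k + 1))) / (1 - δ)) = _
    field_simp
    ring
  have hrec : ∑' k, δ ^ k * w (s (t + k))
      = w (s t) + δ * ∑' k, δ ^ k * w (s (t + 1 + k)) :=
    rec_aux δ (fun n => w (s n)) hsum t
  unfold WVal
  rw [tsum_congr key, tsum_mul_left,
    Summable.tsum_sub (hsum t) ((hsum (t + 1)).mul_left δ), tsum_mul_left, hrec, div_eq_inv_mul]
  ring

lemma canon_WVal0 (δ : ℝ) (hδ1 : δ < 1) (w : ℝ → ℝ) (s : ℕ → ℝ)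
    (hsum : ∀ u, Summable fun k => δ ^ k * w (s (u + k)))
    (hsumq : ∀ u, Summable fun k => δ ^ k * canonP δ w s (u + k)) :
    WVal δ w s (canonP δ w s) 0 = w (s 0) / (1 - δ) := by
  have h1δ : (0:ℝ) < 1 - δ := by linarith
  have hne : (1:ℝ) - δ ≠ 0 := h1δ.ne'
  have hs : ∀ u, Summable fun k => δ ^ k * (w (s (u + k)) + canonP δ w s (u + k)) :=
    fun u => ((hsum u).add (hsumq u)).congr fun k => by ring
  have hrec : WVal δ w s (canonP δ w s) 0
      = (w (s 0) + canonP δ w s 0) + δ * WVal δ w s (canonP δ w s) 1 :=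
    rec_aux δ (fun n => w (s n) + canonP δ w s n) hs 0
  have h2 : WVal δ w s (canonP δ w s) 1 = w (s 0) / (1 - δ) :=
    canon_WVal δ hδ1 w s hsum 0
  rw [hrec, h2]
  show (w (s 0) + 0) + δ * (w (s 0) / (1 - δ)) = w (s 0) / (1 - δ)
  field_simp
  ring

/-- Binding incentive constraints in any nontrivial optimal contract. -/
theorem binding_constraints
    (δ : ℝ) (hδ : δ ∈ Set.Ioo (0 : ℝ) 1) (π w : ℝ → ℝ)
    (hπc : ContinuousOn π (Set.Icc 0 1)) (hwc : ContinuousOn w (Set.Icc 0 1))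
    (hπm : StrictMonoOn π (Set.Icc 0 1)) (hwa : StrictAntiOn w (Set.Icc 0 1))
    (hGm : StrictMonoOn (fun x => π x + w x) (Set.Icc 0 1))
    (s p : ℕ → ℝ) (hopt : Optimal δ π w s p) (hnontrivial : ∃ t, 0 < s t) :
    p 0 = 0 ∧
    (∀ t : ℕ, 1 ≤ t → PiVal δ π s p t = π (s t) / (1 - δ)) ∧
    (∀ t : ℕ, WVal δ w s p (t + 1) = w (s t) / (1 - δ)) := by
  classical
  obtain ⟨hδ0, hδ1⟩ := hδ
  have h1δ : (0:ℝ) < 1 - δ := by linarith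
  have hne : (1:ℝ) - δ ≠ 0 := h1δ.ne'
  obtain ⟨himp, hmax⟩ := hopt
  obtain ⟨⟨hsI, hs0, hsump⟩, hmono, hpnn, hPIC, hEIC⟩ := himp
  -- bounds on π and w over [0,1]
  obtain ⟨Cπ, hCπn⟩ := isCompact_Icc.exists_bound_of_continuousOn hπc
  obtain ⟨Cw, hCwn⟩ := isCompact_Icc.exists_bound_of_continuousOn hwc
  have hCπ : ∀ x ∈ Set.Icc (0:ℝ) 1, |π x| ≤ Cπ := by
    intro x hx; have := hCπn x hx; rwa [Real.norm_eq_abs] at this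
  have hCw : ∀ x ∈ Set.Icc (0:ℝ) 1, |w x| ≤ Cw := by
    intro x hx; have := hCwn x hx; rwa [Real.norm_eq_abs] at this
  -- summability along s
  have hsπ : ∀ t, Summable fun k => δ ^ k * π (s (t + k)) :=
    fun t => summable_aux hδ0.le hδ1 _ Cπ (fun k => hCπ _ (hsI _))
  have hsw : ∀ t, Summable fun k => δ ^ k * w (s (t + k)) :=
    fun t => summable_aux hδ0.le hδ1 _ Cw (fun k => hCw _ (hsI _))
  have hsG : ∀ t, Summable fun k => δ ^ k * (π (s (t + k)) + w (s (t + k))) :=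
    fun t => ((hsπ t).add (hsw t)).congr (fun k => by ring)
  have hsp : ∀ t, Summable fun k => δ ^ k * p (t + k) := shift_summable hδ0 p hsump
  -- total surplus
  set S : ℕ → ℝ := fun t => ∑' k, δ ^ k * (π (s (t + k)) + w (s (t + k))) with hSdef
  have hSapp : ∀ t, S t = ∑' k, δ ^ k * (π (s (t + k)) + w (s (t + k))) := fun t => rfl
  have hSrec : ∀ t, S t = (π (s t) + w (s t)) + δ * S (t + 1) :=
    fun t => rec_aux δ (fun n => π (s n) + w (s n)) hsG t
  have hPWp : ∀ t, PiVal δ π s p t + WVal δ w s p t = S t :=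
    fun t => PiW_aux δ π w s p t (hsπ t) (hsw t) (hsp t)
  -- helper identities
  have hidd : ∀ x : ℝ, x / (1 - δ) = x + δ * (x / (1 - δ)) := by
    intro x; field_simp; ring
  have hdivle : ∀ a b : ℝ, a ≤ b → a / (1 - δ) ≤ b / (1 - δ) := by
    intro a b hab
    rw [div_eq_mul_inv, div_eq_mul_inv]
    exact mul_le_mul_of_nonneg_right hab (inv_nonneg.mpr h1δ.le)
  have hwmono : ∀ a b : ℕ, a ≤ b → w (s b) ≤ w (s a) := by
    intro a b hab
    rcases eq_or_lt_of_le (hmono hab) with he | hl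
    · rw [← he]
    · exact (hwa (hsI a) (hsI b) hl).le
  -- canonical contract for s
  set q : ℕ → ℝ := canonP δ w s with hqdef
  have hq_bdd : ∀ n, |q n| ≤ (Cw + Cw) / (1 - δ) :=
    canon_bdd δ hδ1 w s Cw (fun n => hCw _ (hsI n))
  have hsq : ∀ t, Summable fun k => δ ^ k * q (t + k) :=
    fun t => summable_aux hδ0.le hδ1 _ _ (fun k => hq_bdd _)
  have hq_nn : ∀ n, 0 ≤ q n :=
    canon_nonneg δ hδ1 w s (fun n => hwmono n (n+1) (by omega))
  have hWq1 : ∀ t, WVal δ w s q (t + 1) = w (s t) / (1 - δ) := canon_WVal δ hδ1 w s hsw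
  have hWq0 : WVal δ w s q 0 = w (s 0) / (1 - δ) := canon_WVal0 δ hδ1 w s hsw hsq
  have hPWq : ∀ t, PiVal δ π s q t + WVal δ w s q t = S t :=
    fun t => PiW_aux δ π w s q t (hsπ t) (hsw t) (hsq t)
  have hWrecp : ∀ t, WVal δ w s p t = (w (s t) + p t) + δ * WVal δ w s p (t + 1) :=
    fun t => rec_aux δ (fun n => w (s n) + p n)
      (fun u => ((hsw u).add (hsp u)).congr (fun k => by ring)) t
  have hWple : ∀ t, WVal δ w s q t ≤ WVal δ w s p t := by
    intro t
    cases t with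
    | zero =>
      rw [hWq0]
      have h1 := hEIC 0
      have h2 := hWrecp 0
      have h3 := hpnn 0
      have h4 : δ * (w (s 0) / (1 - δ)) ≤ δ * WVal δ w s p (0 + 1) :=
        mul_le_mul_of_nonneg_left h1 hδ0.le
      have h5 := hidd (w (s 0))
      linarith
    | succ u => rw [hWq1 u]; exact hEIC u
  have hPiqge : ∀ t, π (s t) / (1 - δ) ≤ PiVal δ π s q t := by
    intro t
    have h1 := hPIC t
    have h2 := hPWp t
    have h3 := hPWq t
    have h4 := hWple t
    linarith
  have himpq : Implementable δ π w s q :=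
    ⟨⟨hsI, hs0, summable_aux hδ0.le hδ1 _ _ hq_bdd⟩, hmono, hq_nn, hPiqge,
      fun t => (hWq1 t).ge⟩
  have hqle := hmax s q himpq
  have hWp0 : WVal δ w s p 0 = w (s 0) / (1 - δ) := by
    have h1 := hPWp 0
    have h2 := hPWq 0
    have h3 := hWple 0
    rw [hWq0] at h2 h3
    linarith
  have hPiq0 : PiVal δ π s q 0 = PiVal δ π s p 0 := by
    have h1 := hPWp 0
    have h2 := hPWq 0
    rw [hWq0] at h2
    rw [hWp0] at h1
    linarith
  have hPiqS : ∀ t, PiVal δ π s q t = S t - WVal δ w s q t := fun t => by linarith [hPWq t]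
  -- MAIN CLAIM: the canonical P-IC binds at every t ≥ 1
  have hbind : ∀ m : ℕ, S (m + 1) ≤ π (s (m + 1)) / (1 - δ) + w (s m) / (1 - δ) := by
    by_contra hcon
    push_neg at hcon
    obtain ⟨u, hu⟩ := hcon
    by_cases hex : ∃ v, u + 1 ≤ v ∧ s v < s (v + 1)
    · -- there is room to raise s above time u
      have hfs := Nat.find_spec hex
      have hfm : ∀ r, r < Nat.find hex → ¬(u + 1 ≤ r ∧ s r < s (r + 1)) :=
        fun r hr => Nat.find_min hex hr
      set v₀ := Nat.find hex with hv₀def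
      obtain ⟨huv, hroom⟩ := hfs
      -- slack propagates forward while s is flat
      have hprop : ∀ k, u + 1 + k ≤ v₀ →
          π (s (u + 1 + k)) / (1 - δ) + w (s (u + k)) / (1 - δ) < S (u + 1 + k) := by
        intro k
        induction k with
        | zero => intro _; exact hu
        | succ k ih =>
          intro hk
          have hk' : u + 1 + k ≤ v₀ := by omega
          have hlt : u + 1 + k < v₀ := by omega
          have ihh := ih hk'
          have hnlt := hfm (u + 1 + k) hlt
          push_neg at hnlt
          have h1 : s (u + 1 + k + 1) ≤ s (u + 1 + k) := hnlt (by omega)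
          have h2 : s (u + 1 + k) ≤ s (u + 1 + k + 1) := hmono (Nat.le_succ _)
          have heq : s (u + 1 + k + 1) = s (u + 1 + k) := le_antisymm h1 h2
          have e3 : u + (k + 1) = u + 1 + k := by omega
          have e4 : u + 1 + (k + 1) = u + 1 + k + 1 := by omega
          rw [e3, e4, heq]
          have hw1 : w (s (u + 1 + k)) ≤ w (s (u + k)) := hwmono _ _ (by omega)
          refine lt_of_mul_lt_mul_left ?_ hδ0.le
          have eg : δ * (π (s (u + 1 + k)) / (1 - δ) + w (s (u + 1 + k)) / (1 - δ))
              = δ * (π (s (u + 1 + k)) / (1 - δ)) + δ * (w (s (u + 1 + k)) / (1 - δ)) := by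
            ring
          linarith [ihh, hSrec (u + 1 + k), hdivle _ _ hw1,
            hidd (π (s (u + 1 + k))), hidd (w (s (u + 1 + k))), eg]
      have hm1 : 1 ≤ v₀ := by omega
      obtain ⟨m, hv⟩ : ∃ m, v₀ = m + 1 := ⟨v₀ - 1, by omega⟩
      have hkey := hprop (v₀ - (u + 1)) (by omega)
      have e1 : u + 1 + (v₀ - (u + 1)) = m + 1 := by omega
      have e2 : u + (v₀ - (u + 1)) = m := by omega
      rw [e1, e2] at hkey
      rw [hv] at hroom
      have hroom' : s (m + 1) < s (m + 2) := hroom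
      -- the slack and the perturbation size
      set ΔP := S (m + 1) - w (s m) / (1 - δ) - π (s (m + 1)) / (1 - δ) with hΔPdef
      have hΔP : 0 < ΔP := by rw [hΔPdef]; linarith
      have hcwx : ContinuousWithinAt π (Set.Icc 0 1) (s (m + 1)) :=
        hπc.continuousWithinAt (hsI (m + 1))
      rw [Metric.continuousWithinAt_iff] at hcwx
      obtain ⟨d, hd0, hd⟩ := hcwx ((1 - δ) * ΔP) (mul_pos h1δ hΔP)
      set η := min (s (m + 2) - s (m + 1)) (d / 2) with hηdef
      have hη0 : 0 < η := by
        rw [hηdef]; exact lt_min (by linarith) (by linarith)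
      have hηle : η ≤ s (m + 2) - s (m + 1) := min_le_left _ _
      have hηd : η ≤ d / 2 := min_le_right _ _
      set x := s (m + 1) + η with hxdef
      have hsx : s (m + 1) < x := by rw [hxdef]; linarith
      have hx1 : 0 ≤ x := by rw [hxdef]; linarith [(hsI (m + 1)).1]
      have hx2 : x ≤ 1 := by rw [hxdef]; linarith [(hsI (m + 2)).2]
      have hxI : x ∈ Set.Icc (0:ℝ) 1 := Set.mem_Icc.mpr ⟨hx1, hx2⟩
      have hπx : π x < π (s (m + 1)) + (1 - δ) * ΔP := by
        have hdist : dist x (s (m + 1)) < d := by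
          rw [Real.dist_eq]
          have e : x - s (m + 1) = η := by rw [hxdef]; ring
          rw [e, abs_of_pos hη0]
          linarith
        have h := hd hxI hdist
        rw [Real.dist_eq] at h
        have h' := abs_lt.mp h
        linarith [h'.1, h'.2]
      -- the perturbed path
      set s' : ℕ → ℝ := fun n => if n = m + 1 then x else s n with hs'def
      have hs'at : s' (m + 1) = x := by simp [hs'def]
      have hs'ne : ∀ n, n ≠ m + 1 → s' n = s n := by
        intro n h; simp [hs'def, h]
      have hs'I : ∀ n, s' n ∈ Set.Icc (0:ℝ) 1 := by
        intro n
        by_cases h : n = m + 1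
        · rw [h, hs'at]; exact hxI
        · rw [hs'ne n h]; exact hsI n
      have hs'0 : s' 0 = 0 := by rw [hs'ne 0 (by omega)]; exact hs0
      have hs'mono : Monotone s' := by
        apply monotone_nat_of_le_succ
        intro n
        by_cases h1 : n = m + 1
        · rw [h1, hs'at, hs'ne (m + 1 + 1) (by omega)]
          show x ≤ s (m + 2)
          rw [hxdef]; linarith
        · by_cases h2 : n + 1 = m + 1
          · rw [hs'ne n h1, h2, hs'at]
            have : s n ≤ s (m + 1) := hmono (by omega)
            linarith
          · rw [hs'ne n h1, hs'ne (n + 1) h2]; exact hmono (Nat.le_succ n)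
      have hws' : ∀ n, |w (s' n)| ≤ Cw := fun n => hCw _ (hs'I n)
      have hsw' : ∀ t, Summable fun k => δ ^ k * w (s' (t + k)) :=
        fun t => summable_aux hδ0.le hδ1 _ Cw (fun k => hws' _)
      have hsπ' : ∀ t, Summable fun k => δ ^ k * π (s' (t + k)) :=
        fun t => summable_aux hδ0.le hδ1 _ Cπ (fun k => hCπ _ (hs'I _))
      have hsG' : ∀ t, Summable fun k => δ ^ k * (π (s' (t + k)) + w (s' (t + k))) :=
        fun t => ((hsπ' t).add (hsw' t)).congr (fun k => by ring)
      set q' : ℕ → ℝ := canonP δ w s' with hq'def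
      have hws'mono : ∀ n, w (s' (n + 1)) ≤ w (s' n) := by
        intro n
        rcases eq_or_lt_of_le (hs'mono (Nat.le_succ n)) with he | hl
        · rw [← he]
        · exact (hwa (hs'I n) (hs'I (n + 1)) hl).le
      have hq'nn : ∀ n, 0 ≤ q' n := canon_nonneg δ hδ1 w s' hws'mono
      have hq'bdd : ∀ n, |q' n| ≤ (Cw + Cw) / (1 - δ) := canon_bdd δ hδ1 w s' Cw hws'
      have hsq' : ∀ t, Summable fun k => δ ^ k * q' (t + k) :=
        fun t => summable_aux hδ0.le hδ1 _ _ (fun k => hq'bdd _)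
      have hWq'1 : ∀ t, WVal δ w s' q' (t + 1) = w (s' t) / (1 - δ) :=
        canon_WVal δ hδ1 w s' hsw'
      have hWq'0 : WVal δ w s' q' 0 = w (s' 0) / (1 - δ) :=
        canon_WVal0 δ hδ1 w s' hsw' hsq'
      set S' : ℕ → ℝ := fun t => ∑' k, δ ^ k * (π (s' (t + k)) + w (s' (t + k))) with hS'def
      have hS'app : ∀ t, S' t = ∑' k, δ ^ k * (π (s' (t + k)) + w (s' (t + k))) :=
        fun t => rfl
      have hPWq' : ∀ t, PiVal δ π s' q' t + WVal δ w s' q' t = S' t :=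
        fun t => PiW_aux δ π w s' q' t (hsπ' t) (hsw' t) (hsq' t)
      have hPi'S : ∀ t, PiVal δ π s' q' t = S' t - WVal δ w s' q' t :=
        fun t => by linarith [hPWq' t]
      set ΔG := (π x + w x) - (π (s (m + 1)) + w (s (m + 1))) with hΔGdef
      have hΔG : 0 < ΔG := by
        have h := hGm (hsI (m + 1)) hxI hsx
        simp only [] at h
        rw [hΔGdef]
        linarith
      have hS'le : ∀ t, t ≤ m + 1 → S' t = S t + δ ^ (m + 1 - t) * ΔG := by
        intro t ht
        have hz : ∀ k, k ≠ m + 1 - t →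
            (δ ^ k * (π (s' (t + k)) + w (s' (t + k)))
              - δ ^ k * (π (s (t + k)) + w (s (t + k)))) = 0 := by
          intro k hk
          have hne2 : t + k ≠ m + 1 := by omega
          rw [hs'ne _ hne2]; ring
        have h1 : (∑' k, (δ ^ k * (π (s' (t + k)) + w (s' (t + k)))
              - δ ^ k * (π (s (t + k)) + w (s (t + k))))) = δ ^ (m + 1 - t) * ΔG := by
          rw [tsum_eq_single _ hz]
          have e : t + (m + 1 - t) = m + 1 := by omega
          rw [e, hs'at, hΔGdef]
          ring
        have h2 := Summable.tsum_sub (hsG' t) (hsG t)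
        rw [h2] at h1
        rw [hS'app t, hSapp t]
        linarith
      have hS'gt : ∀ t, m + 1 < t → S' t = S t := by
        intro t ht
        rw [hS'app t, hSapp t]
        exact tsum_congr fun k => by rw [hs'ne (t + k) (by omega)]
      have hWeq : ∀ t, t ≤ m + 1 → WVal δ w s' q' t = WVal δ w s q t := by
        intro t ht
        cases t with
        | zero => rw [hWq'0, hWq0, hs'ne 0 (by omega)]
        | succ r => rw [hWq'1 r, hWq1 r, hs'ne r (by omega)]
      -- P-IC for the perturbed canonical contract
      have hPIC' : ∀ t, π (s' t) / (1 - δ) ≤ PiVal δ π s' q' t := by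
        intro t
        rcases Nat.lt_or_ge t (m + 1) with hlt | hge
        · rw [hs'ne t (by omega), hPi'S t, hS'le t (by omega), hWeq t (by omega)]
          have h1 := hPiqge t
          rw [hPiqS t] at h1
          have h2 : 0 ≤ δ ^ (m + 1 - t) * ΔG := mul_nonneg (pow_nonneg hδ0.le _) hΔG.le
          exact h1.trans (sub_le_sub_right (le_add_of_nonneg_right h2) _)
        · rcases eq_or_lt_of_le hge with he | hgt
          · subst he
            rw [hs'at, hPi'S, hS'le (m + 1) le_rfl, hWeq (m + 1) le_rfl, hWq1 m]
            rw [show m + 1 - (m + 1) = 0 from by omega, pow_zero, one_mul]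
            have h7 := hdivle (π x) (π (s (m + 1)) + (1 - δ) * ΔP) hπx.le
            have h8 : (π (s (m + 1)) + (1 - δ) * ΔP) / (1 - δ)
                = π (s (m + 1)) / (1 - δ) + ΔP := by
              field_simp
            linarith [hΔG, hΔPdef, h7, h8]
          · obtain ⟨r, rfl⟩ : ∃ r, t = r + 1 := ⟨t - 1, by omega⟩
            rw [hPi'S, hS'gt (r + 1) hgt, hWq'1 r, hs'ne (r + 1) (by omega)]
            have hwr : w (s' r) ≤ w (s r) := by
              by_cases hr : r = m + 1
              · rw [hr, hs'at]
                exact (hwa (hsI (m + 1)) hxI hsx).le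
              · rw [hs'ne r hr]
            have h1 := hPiqge (r + 1)
            rw [hPiqS (r + 1), hWq1 r] at h1
            have h2 := hdivle _ _ hwr
            linarith
      have himpq' : Implementable δ π w s' q' :=
        ⟨⟨hs'I, hs'0, summable_aux hδ0.le hδ1 _ _ hq'bdd⟩, hs'mono, hq'nn, hPIC',
          fun t => (hWq'1 t).ge⟩
      have hle := hmax s' q' himpq'
      have hPi'0 : PiVal δ π s' q' 0 = PiVal δ π s p 0 + δ ^ (m + 1) * ΔG := by
        rw [hPi'S 0, hS'le 0 (by omega), hWeq 0 (by omega)]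
        simp only [Nat.sub_zero]
        linarith [hPiqS 0, hPiq0]
      have hpos : 0 < δ ^ (m + 1) * ΔG := mul_pos (pow_pos hδ0 _) hΔG
      linarith [hle, hPi'0, hpos]
    · -- s is eventually flat after u: the constraint binds automatically
      push_neg at hex
      have hcst : ∀ k, s (u + 1 + k) = s (u + 1) := by
        intro k
        induction k with
        | zero => rfl
        | succ k ih =>
          have h1 : s (u + 1 + k + 1) ≤ s (u + 1 + k) := hex (u + 1 + k) (by omega)
          exact le_antisymm (le_trans h1 (le_of_eq ih)) (hmono (by omega))
      have e1 : S (u + 1) = ∑' (k : ℕ), δ ^ k * (π (s (u + 1)) + w (s (u + 1))) := by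
        rw [hSapp (u + 1)]
        exact tsum_congr fun k => by rw [hcst k]
      have hSc : S (u + 1) = (π (s (u + 1)) + w (s (u + 1))) * (1 - δ)⁻¹ := by
        rw [e1, tsum_mul_right, tsum_geometric_of_lt_one hδ0.le hδ1]
        ring
      have h6 := hwmono u (u + 1) (by omega)
      have h7 : (1 - δ) * S (u + 1) = π (s (u + 1)) + w (s (u + 1)) := by
        rw [hSc]; field_simp
      have h8 : (1 - δ) * (π (s (u + 1)) / (1 - δ)) = π (s (u + 1)) := by field_simp
      have h9 : (1 - δ) * (w (s u) / (1 - δ)) = w (s u) := by field_simp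
      have h10 := mul_lt_mul_of_pos_left hu h1δ
      rw [mul_add] at h10
      linarith
  -- assemble the conclusions
  have hW3 : ∀ t : ℕ, WVal δ w s p (t + 1) = w (s t) / (1 - δ) := by
    intro t
    have h1 := hPIC (t + 1)
    have h2 := hPWp (t + 1)
    have h3 := hEIC t
    have h4 := hbind t
    linarith
  refine ⟨?_, ?_, hW3⟩
  · have h1 := hWrecp 0
    rw [hW3 0] at h1
    rw [hWp0] at h1
    have h2 := hidd (w (s 0))
    linarith
  · intro t ht
    obtain ⟨r, rfl⟩ : ∃ r, t = r + 1 := ⟨t - 1, by omega⟩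
    have h1 := hPIC (r + 1)
    have h2 := hPWp (r + 1)
    have h3 := hW3 r
    have h4 := hbind r
    linarith
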